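/- Let G_b = (V,E_b) be a finite simple graph with maximum degree at most Δ and expansion φ(G_b) ≥ α_b for some α_b > 0. Let D ⊆ E_b, let A be the set of endpoints of edges in D, and let G = (V, E_b∖D). Let V_H ⊆ V, let H = G[V_H] be the subgraph of G induced by V_H, let A_H be the set of endpoints of edges in ∂_G(V_H), and let B_H = (A ∪ A_H) ∩ V_H. Set σ = α_b/(2Δ). Then for every α' < α_b/2, every nonempty S ⊆ V_H with |S| ≤ |V_H∖S| and φ_H(S) < α' is (B_H,σ)-overlapping in H, i.e. |S ∩ B_H| ≥ σ·|S|. -/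
import Mathlib


/-- Edges of `G` with one endpoint in `S` and the other endpoint in `U \ S`:
the cut edges `∂(S)` of `S`, inside the subgraph of `G` induced by `U` (when `S ⊆ U`). -/
def cutEdgesIn {V : Type*} (G : SimpleGraph V) (U S : Set V) : Set (Sym2 V) :=
  {e | e ∈ G.edgeSet ∧ ∃ u v, e = s(u, v) ∧ u ∈ S ∧ v ∈ U ∧ v ∉ S}

/-- `δ(S)`, the number of cut edges of `S` inside the subgraph induced by `U`. -/
noncomputable def deltaIn {V : Type*} (G : SimpleGraph V) (U S : Set V) : ℕ :=
  (cutEdgesIn G U S).ncard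

/-- The expansion `φ(S)` of the cut `S` inside the subgraph of `G` induced by `U`. -/
noncomputable def phiIn {V : Type*} (G : SimpleGraph V) (U S : Set V) : ℝ :=
  (deltaIn G U S : ℝ) / min (S.ncard : ℝ) ((U \ S).ncard : ℝ)

lemma aux_biUnion_ncard {V : Type*} [Fintype V] (K : Set V) (f : V → Set (Sym2 V)) (Δ : ℕ)
    (h : ∀ v, (f v).ncard ≤ Δ) : (⋃ v ∈ K, f v).ncard ≤ K.ncard * Δ := by
  classical
  have heq : (⋃ v ∈ K, f v) = ↑(K.toFinset.biUnion fun v => (f v).toFinset) := by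
    ext e; simp [Set.mem_iUnion]
  rw [heq, Set.ncard_coe_finset, Set.ncard_eq_toFinset_card' K]
  exact Finset.card_biUnion_le_card_mul _ _ _ fun v _ => by
    simpa [← Set.ncard_eq_toFinset_card' (f v)] using h v


/-- Let `G_b` have maximum degree ≤ `Δ` and expansion `φ(G_b) ≥ α_b > 0`,
`D ⊆ E_b`, `A` the endpoints of `D`, `G = (V, E_b ∖ D)`, `H = G[V_H]`, `A_H` the endpoints of
`∂_G(V_H)`, `B_H = (A ∪ A_H) ∩ V_H`, and `σ = α_b/(2Δ)`. Then for every `α' < α_b/2`, every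
nonempty `S ⊆ V_H` with `|S| ≤ |V_H ∖ S|` and `φ_H(S) < α'` is `(B_H, σ)`-overlapping in `H`,
i.e. `|S ∩ B_H| ≥ σ·|S|`. -/
theorem stmt7 {V : Type*} [Fintype V] (Gb : SimpleGraph V) (Δ : ℕ) (αb : ℝ) (hαb : 0 < αb)
    (hdeg : ∀ v : V, (Gb.neighborSet v).ncard ≤ Δ)
    (hexp : ∀ S : Set V, S.Nonempty → S ≠ Set.univ → αb ≤ phiIn Gb Set.univ S)
    (D : Set (Sym2 V)) (hD : D ⊆ Gb.edgeSet)
    (VH : Set V) (α' : ℝ) (hα' : α' < αb / 2)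
    (S : Set V) (hSsub : S ⊆ VH) (hSne : S.Nonempty)
    (hSsize : S.ncard ≤ (VH \ S).ncard)
    (hSphi : phiIn (Gb.deleteEdges D) VH S < α') :
    (αb / (2 * (Δ : ℝ))) * (S.ncard : ℝ) ≤
      ((S ∩ (({v : V | ∃ e ∈ D, v ∈ e} ∪
        {v : V | ∃ e ∈ cutEdgesIn (Gb.deleteEdges D) Set.univ VH, v ∈ e}) ∩ VH)).ncard : ℝ) := by
  classical
  set Gd := Gb.deleteEdges D with hGd
  set K := S ∩ (({v : V | ∃ e ∈ D, v ∈ e} ∪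
      {v : V | ∃ e ∈ cutEdgesIn Gd Set.univ VH, v ∈ e}) ∩ VH) with hK
  rcases Nat.eq_zero_or_pos Δ with hΔ | hΔ
  · simp only [hΔ, Nat.cast_zero, mul_zero, div_zero, zero_mul]
    positivity
  have hΔR : (0:ℝ) < Δ := by exact_mod_cast hΔ
  have hSfin : S.Finite := Set.toFinite _
  have hSpos : (0:ℝ) < S.ncard := by exact_mod_cast hSne.ncard_pos hSfin
  have hVHS : (VH \ S).Nonempty := by
    apply Set.nonempty_of_ncard_ne_zero
    intro h0
    rw [h0, Nat.le_zero] at hSsize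
    exact (hSne.ncard_pos hSfin).ne' hSsize
  have hSuniv : S ≠ Set.univ := by
    obtain ⟨x, hxVH, hxS⟩ := hVHS
    intro h; exact hxS (h ▸ Set.mem_univ x)
  -- lower bound from expansion
  have hlow : αb * S.ncard ≤ (deltaIn Gb Set.univ S : ℝ) := by
    have h := hexp S hSne hSuniv
    have hmin1 : (S.ncard : ℝ) ≤ (((Set.univ \ S : Set V)).ncard : ℝ) := by
      exact_mod_cast hSsize.trans
        (Set.ncard_le_ncard (Set.diff_subset_diff_left (Set.subset_univ VH)) (Set.toFinite _))
    rw [phiIn, min_eq_left hmin1, le_div_iff₀ hSpos] at h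
    exact h
  -- upper bound on δ_H
  have hhigh : (deltaIn Gd VH S : ℝ) < α' * S.ncard := by
    have hmin2 : min (S.ncard : ℝ) (((VH \ S : Set V)).ncard : ℝ) = (S.ncard : ℝ) :=
      min_eq_left (by exact_mod_cast hSsize)
    rw [phiIn, hmin2, div_lt_iff₀ hSpos] at hSphi
    exact hSphi
  -- inclusion of cut edges
  have hincl : cutEdgesIn Gb Set.univ S ⊆
      cutEdgesIn Gd VH S ∪ ⋃ v ∈ K, Gb.incidenceSet v := by
    rintro e ⟨heE, u, v, rfl, huS, -, hvS⟩
    by_cases heD : s(u,v) ∈ D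
    · right
      refine Set.mem_biUnion ?_ ⟨heE, Sym2.mem_mk_left u v⟩
      exact ⟨huS, Or.inl ⟨_, heD, Sym2.mem_mk_left u v⟩, hSsub huS⟩
    · have heGd : s(u, v) ∈ Gd.edgeSet := by
        rw [hGd, SimpleGraph.edgeSet_deleteEdges]
        exact ⟨heE, heD⟩
      by_cases hvVH : v ∈ VH
      · exact Or.inl ⟨heGd, u, v, rfl, huS, hvVH, hvS⟩
      · right
        refine Set.mem_biUnion ?_ ⟨heE, Sym2.mem_mk_left u v⟩
        refine ⟨huS, Or.inr ⟨s(u, v), ⟨heGd, u, v, rfl, hSsub huS, trivial, hvVH⟩,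
          Sym2.mem_mk_left u v⟩, hSsub huS⟩
  -- incidence sets are small
  have hinc : ∀ v : V, (Gb.incidenceSet v).ncard ≤ Δ := by
    intro v
    have : (Gb.incidenceSet v).ncard = (Gb.neighborSet v).ncard := by
      rw [Set.ncard_eq_toFinset_card', Set.ncard_eq_toFinset_card', Set.toFinset_card,
        Set.toFinset_card, SimpleGraph.card_incidenceSet_eq_degree,
        SimpleGraph.card_neighborSet_eq_degree]
    rw [this]; exact hdeg v
  have hcount : (deltaIn Gb Set.univ S : ℝ) ≤ (deltaIn Gd VH S : ℝ) + (K.ncard : ℝ) * Δ := by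
    have h1 : deltaIn Gb Set.univ S ≤ deltaIn Gd VH S + K.ncard * Δ := by
      calc deltaIn Gb Set.univ S
          ≤ (cutEdgesIn Gd VH S ∪ ⋃ v ∈ K, Gb.incidenceSet v).ncard :=
            Set.ncard_le_ncard hincl (Set.toFinite _)
        _ ≤ (cutEdgesIn Gd VH S).ncard + (⋃ v ∈ K, Gb.incidenceSet v).ncard :=
            Set.ncard_union_le _ _
        _ ≤ deltaIn Gd VH S + K.ncard * Δ := by
            exact Nat.add_le_add_left (aux_biUnion_ncard K _ Δ hinc) _
    exact_mod_cast h1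
  -- final arithmetic
  rw [div_mul_eq_mul_div, div_le_iff₀ (by positivity)]
  have hα'S : α' * S.ncard ≤ (αb / 2) * S.ncard :=
    mul_le_mul_of_nonneg_right hα'.le hSpos.le
  nlinarith [hlow, hhigh, hcount, hα'S]
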